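/- Let z(t,x) be the unique real root of x = t·z − z³ (t < 0), and set σ(t) = (4/3)|t|^{−1/2}. Define Z̃(t,x) := z(t, x − σ(t)) + (2/3)|t|^{−3/2} for x ≥ 0 and t < 0. Then Z̃ is a supersolution of the viscous Burgers equation on {t < 0, x ≥ 0}: Z̃_t + Z̃ Z̃_x − Z̃_{xx} ≥ 0, and Z̃(t,0) ≥ 0 = z(t,0). -/

import Mathlib

/-- The shift `σ(t) = (4/3)|t|^{−1/2}`. -/
noncomputable def sigmaShift (t : ℝ) : ℝ := (4 / 3) * |t| ^ (-(1 : ℝ) / 2)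

namespace ShiftedRootAux

noncomputable def g (w : ℝ) : ℝ := -w - w ^ 3

lemma g_anti : StrictAnti g := by
  intro a b hab
  simp only [g]
  nlinarith [sq_nonneg (a + b), sq_nonneg a, sq_nonneg b, sq_nonneg (a - b)]

lemma g_cont : Continuous g := by
  unfold g; fun_prop

lemma g_surj : Function.Surjective g := by
  intro y
  have h1 : g (|y| + 1) ≤ y := by
    simp only [g]
    nlinarith [abs_nonneg y, neg_abs_le y, le_abs_self y,
      pow_nonneg (by positivity : (0:ℝ) ≤ |y| + 1) 3]
  have h2 : y ≤ g (-(|y| + 1)) := by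
    simp only [g]
    nlinarith [abs_nonneg y, neg_abs_le y, le_abs_self y,
      pow_nonneg (by positivity : (0:ℝ) ≤ |y| + 1) 3]
  have hle : -(|y| + 1) ≤ |y| + 1 := by nlinarith [abs_nonneg y]
  obtain ⟨c, -, hc⟩ :=
    intermediate_value_Icc' hle g_cont.continuousOn (Set.mem_Icc.mpr ⟨h1, h2⟩)
  exact ⟨c, hc⟩

noncomputable def h (y : ℝ) : ℝ := Function.invFun g y

lemma g_h (y : ℝ) : g (h y) = y := Function.rightInverse_invFun g_surj y

lemma h_g (w : ℝ) : h (g w) = w := Function.leftInverse_invFun g_anti.injective w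

lemma h_anti : StrictAnti h := by
  intro a b hab
  rcases lt_trichotomy (h b) (h a) with hc | hc | hc
  · exact hc
  · exfalso
    have := congrArg g hc
    rw [g_h, g_h] at this
    exact (ne_of_gt hab) this
  · exfalso
    have := g_anti hc
    rw [g_h, g_h] at this
    exact absurd this (not_lt.mpr hab.le)

lemma h_cont : Continuous h := by
  have hmono : Monotone (fun y => h (-y)) :=
    (StrictMono.monotone (fun a b hab => h_anti (neg_lt_neg hab)))
  have hsurj : Function.Surjective (fun y => h (-y)) := fun w => ⟨-(g w), by simp [h_g]⟩
  have hcont : Continuous (fun y : ℝ => h (-y)) := hmono.continuous_of_surjective hsurj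
  have h2 : Continuous fun y : ℝ => h (- -y) := hcont.comp continuous_neg
  simpa using h2

lemma hasDerivAt_g (w : ℝ) : HasDerivAt g (-1 - 3 * w ^ 2) w := by
  have h1 : HasDerivAt (fun x : ℝ => -x - x ^ 3) (-1 - 3 * w ^ 2) w := by
    have := (hasDerivAt_id w).neg.sub (hasDerivAt_pow 3 w)
    exact this.congr_deriv (by norm_num)
  exact h1

lemma A_neg (H : ℝ) : -1 - 3 * H ^ 2 < 0 := by nlinarith [sq_nonneg H]

lemma hasDerivAt_h (y : ℝ) : HasDerivAt h (-1 - 3 * (h y) ^ 2)⁻¹ y := by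
  apply HasDerivAt.of_local_left_inverse h_cont.continuousAt (hasDerivAt_g (h y))
    (ne_of_lt (A_neg _))
  exact Filter.Eventually.of_forall g_h

noncomputable def P (s : ℝ) : ℝ := (-s) ^ (-(1 : ℝ) / 2)

lemma P_pos {s : ℝ} (hs : s < 0) : 0 < P s := Real.rpow_pos_of_pos (by linarith) _

lemma P_cube {s : ℝ} (hs : s < 0) : (P s) ^ 3 = (-s) ^ (-(3 : ℝ) / 2) := by
  rw [P, ← Real.rpow_natCast ((-s) ^ (-(1:ℝ)/2)) 3,
    ← Real.rpow_mul (by linarith : (0:ℝ) ≤ -s)]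
  norm_num

lemma P_inv {s : ℝ} (hs : s < 0) : (P s)⁻¹ = (-s) ^ ((1 : ℝ) / 2) := by
  rw [P, show (-(1:ℝ)/2) = -((1:ℝ)/2) by norm_num,
    Real.rpow_neg (by linarith : (0:ℝ) ≤ -s), inv_inv]

lemma hasDerivAt_P {t : ℝ} (ht : t < 0) : HasDerivAt P (1 / 2 * (P t) ^ 3) t := by
  have h1 : HasDerivAt (fun s : ℝ => -s) (-1) t := (hasDerivAt_id t).neg
  have h2 := h1.rpow_const (p := -(1:ℝ)/2) (Or.inl (by simp; linarith))
  refine h2.congr_deriv ?_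
  rw [P_cube ht, show (-(1:ℝ)/2 - 1) = -(3:ℝ)/2 by norm_num]
  ring

lemma cubic_unique {t a b : ℝ} (ht : t < 0) (hab : t * a - a ^ 3 = t * b - b ^ 3) :
    a = b := by
  have key : (a - b) * (t - (a ^ 2 + a * b + b ^ 2)) = 0 := by linear_combination hab
  have h2 : t - (a ^ 2 + a * b + b ^ 2) ≠ 0 := by
    have : t - (a ^ 2 + a * b + b ^ 2) < 0 := by
      nlinarith [sq_nonneg (a + b), sq_nonneg a, sq_nonneg b]
    exact ne_of_lt this
  have := (mul_eq_zero.mp key).resolve_right h2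
  linarith

end ShiftedRootAux

set_option maxHeartbeats 1000000 in
open ShiftedRootAux in
/-- The comparison function `Z̃(t,x) = z(t, x − σ(t)) + (2/3)|t|^{−3/2}` is a
supersolution of the viscous Burgers equation on `{t < 0, x ≥ 0}`, with
`Z̃(t,0) ≥ 0 = z(t,0)`. -/
theorem shifted_root_supersolution (z : ℝ → ℝ → ℝ)
    (hz : ∀ t : ℝ, t < 0 → ∀ x : ℝ, x = t * z t x - (z t x) ^ 3)
    (W : ℝ → ℝ → ℝ)
    (hW : ∀ t x : ℝ, W t x = z t (x - sigmaShift t) + (2 / 3) * |t| ^ (-(3 : ℝ) / 2)) :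
    ∀ t x : ℝ, t < 0 → 0 ≤ x →
      0 ≤ deriv (fun s => W s x) t + W t x * deriv (fun y => W t y) x
            - deriv (deriv (fun y => W t y)) x ∧
      z t 0 ≤ W t 0 ∧ z t 0 = 0 := by
  intro t x ht hx
  have hPt : 0 < P t := P_pos ht
  have hPne : P t ≠ 0 := ne_of_gt hPt
  -- explicit formula for z
  have hzE : ∀ s, s < 0 → ∀ y, z s y = (P s)⁻¹ * h (y * (P s) ^ 3) := by
    intro s hs y
    have hτ : (0:ℝ) < -s := by linarith
    have hgc : -h (y * (P s) ^ 3) - (h (y * (P s) ^ 3)) ^ 3 = y * (P s) ^ 3 := g_h _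
    have e3 : (-s) ^ ((3:ℝ)/2) * (-s) ^ (-(3:ℝ)/2) = 1 := by
      rw [← Real.rpow_add hτ]; norm_num
    have e2 : ((-s) ^ ((1:ℝ)/2)) ^ 3 = (-s) ^ ((3:ℝ)/2) := by
      rw [← Real.rpow_natCast ((-s) ^ ((1:ℝ)/2)) 3, ← Real.rpow_mul hτ.le]
      norm_num
    have e1 : s * (-s) ^ ((1:ℝ)/2) = -((-s) ^ ((3:ℝ)/2)) := by
      rw [show (3:ℝ)/2 = 1 + 1/2 by norm_num, Real.rpow_add hτ, Real.rpow_one]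
      ring
    have hcand : y = s * ((P s)⁻¹ * h (y * (P s) ^ 3)) - ((P s)⁻¹ * h (y * (P s) ^ 3)) ^ 3 := by
      rw [P_inv hs]
      have hPc := P_cube hs
      calc y = (-s) ^ ((3:ℝ)/2) * (-s) ^ (-(3:ℝ)/2) * y := by rw [e3]; ring
        _ = (-s) ^ ((3:ℝ)/2) * (y * (P s) ^ 3) := by rw [hPc]; ring
        _ = (-s) ^ ((3:ℝ)/2) * (-h (y * (P s) ^ 3) - (h (y * (P s) ^ 3)) ^ 3) := by rw [hgc]
        _ = s * ((-s) ^ ((1:ℝ)/2) * h (y * (P s) ^ 3))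
              - ((-s) ^ ((1:ℝ)/2) * h (y * (P s) ^ 3)) ^ 3 := by
            rw [mul_pow, e2]; linear_combination (-(h (y * P s ^ 3))) * e1
    have hz' := hz s hs y
    exact cubic_unique hs (by linarith [hz', hcand] : s * z s y - (z s y) ^ 3
      = s * ((P s)⁻¹ * h (y * (P s) ^ 3)) - ((P s)⁻¹ * h (y * (P s) ^ 3)) ^ 3)
  -- W explicit
  have hWE : ∀ s, s < 0 → ∀ y, W s y =
      (P s)⁻¹ * h ((y - 4 / 3 * P s) * (P s) ^ 3) + 2 / 3 * (P s) ^ 3 := by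
    intro s hs y
    have habs' : |s| = -s := abs_of_neg hs
    have e1 : sigmaShift s = 4 / 3 * P s := by
      rw [sigmaShift, habs']; rfl
    have e2 : |s| ^ (-(3:ℝ)/2) = (P s) ^ 3 := by rw [habs', ← P_cube hs]
    rw [hW, hzE s hs, e1, e2]
  set H : ℝ := h ((x - 4 / 3 * P t) * (P t) ^ 3) with hHdef
  have hAne : (-1 - 3 * H ^ 2) ≠ 0 := ne_of_lt (A_neg H)
  have hrel : -H - H ^ 3 = (x - 4 / 3 * P t) * (P t) ^ 3 := by
    have h0 := g_h ((x - 4 / 3 * P t) * (P t) ^ 3)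
    rw [← hHdef] at h0
    simpa [g] using h0
  have hxx : x - 4 / 3 * P t = (-H - H ^ 3) / (P t) ^ 3 := by
    rw [eq_div_iff (pow_ne_zero 3 hPne)]
    exact hrel.symm
  -- x-derivative machinery
  have hVd : ∀ y : ℝ, HasDerivAt (fun y' : ℝ => (y' - 4 / 3 * P t) * (P t) ^ 3)
      ((P t) ^ 3) y := by
    intro y
    simpa using ((hasDerivAt_id y).sub_const (4 / 3 * P t)).mul_const ((P t) ^ 3)
  have hhx : ∀ y : ℝ, HasDerivAt (fun y' : ℝ => h ((y' - 4 / 3 * P t) * (P t) ^ 3))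
      ((-1 - 3 * (h ((y - 4 / 3 * P t) * (P t) ^ 3)) ^ 2)⁻¹ * (P t) ^ 3) y := by
    intro y
    exact (hasDerivAt_h _).comp y (hVd y)
  have hEx : ∀ y : ℝ, HasDerivAt
      (fun y' : ℝ => (P t)⁻¹ * h ((y' - 4 / 3 * P t) * (P t) ^ 3) + 2 / 3 * (P t) ^ 3)
      ((P t)⁻¹ * ((-1 - 3 * (h ((y - 4 / 3 * P t) * (P t) ^ 3)) ^ 2)⁻¹ * (P t) ^ 3)) y := by
    intro y
    exact ((hhx y).const_mul _).add_const _
  have hWfun : (fun y => W t y) =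
      fun y => (P t)⁻¹ * h ((y - 4 / 3 * P t) * (P t) ^ 3) + 2 / 3 * (P t) ^ 3 :=
    funext fun y => hWE t ht y
  have hd2 : deriv (fun y => W t y) x = (P t)⁻¹ * ((-1 - 3 * H ^ 2)⁻¹ * (P t) ^ 3) := by
    rw [hWfun]
    exact (hEx x).deriv
  have hderivW : deriv (fun y => W t y) =
      fun y => (P t)⁻¹ * ((-1 - 3 * (h ((y - 4 / 3 * P t) * (P t) ^ 3)) ^ 2)⁻¹ * (P t) ^ 3) := by
    funext y
    rw [hWfun]
    exact (hEx y).deriv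
  -- second x-derivative
  have hsq : HasDerivAt (fun y : ℝ => (h ((y - 4 / 3 * P t) * (P t) ^ 3)) ^ 2)
      (2 * H * ((-1 - 3 * H ^ 2)⁻¹ * (P t) ^ 3)) x := by
    exact ((hhx x).pow 2).congr_deriv (by simp [hHdef])
  have hstep1 : HasDerivAt
      (fun y : ℝ => -1 - 3 * (h ((y - 4 / 3 * P t) * (P t) ^ 3)) ^ 2)
      (-(3 * (2 * H * ((-1 - 3 * H ^ 2)⁻¹ * (P t) ^ 3)))) x :=
    HasDerivAt.const_sub (-1) (hsq.const_mul 3)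
  have hstep2 : HasDerivAt
      (fun y : ℝ => (-1 - 3 * (h ((y - 4 / 3 * P t) * (P t) ^ 3)) ^ 2)⁻¹)
      (-(-(3 * (2 * H * ((-1 - 3 * H ^ 2)⁻¹ * (P t) ^ 3)))) / (-1 - 3 * H ^ 2) ^ 2) x :=
    hstep1.inv hAne
  have hstep3 := (hstep2.mul_const ((P t) ^ 3)).const_mul ((P t)⁻¹)
  have hd3 : deriv (deriv (fun y => W t y)) x =
      (P t)⁻¹ * (-(-(3 * (2 * H * ((-1 - 3 * H ^ 2)⁻¹ * (P t) ^ 3)))) / (-1 - 3 * H ^ 2) ^ 2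
        * (P t) ^ 3) := by
    rw [hderivW]
    exact hstep3.deriv
  -- t-derivative
  have hP' := hasDerivAt_P ht
  have h1 : HasDerivAt (fun s => (P s)⁻¹) (-(1 / 2 * (P t) ^ 3) / (P t) ^ 2) t :=
    hP'.inv hPne
  have h2 : HasDerivAt (fun s => (P s) ^ 3) (3 * (P t) ^ 2 * (1 / 2 * (P t) ^ 3)) t := by
    exact (hP'.pow 3).congr_deriv (by norm_num)
  have h3 : HasDerivAt (fun s => x - 4 / 3 * P s) (-(4 / 3 * (1 / 2 * (P t) ^ 3))) t :=
    HasDerivAt.const_sub x (hP'.const_mul (4 / 3))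
  have h4 : HasDerivAt (fun s => (x - 4 / 3 * P s) * (P s) ^ 3)
      (-(4 / 3 * (1 / 2 * (P t) ^ 3)) * (P t) ^ 3
        + (x - 4 / 3 * P t) * (3 * (P t) ^ 2 * (1 / 2 * (P t) ^ 3))) t := h3.mul h2
  have h5 : HasDerivAt (fun s => h ((x - 4 / 3 * P s) * (P s) ^ 3))
      ((-1 - 3 * H ^ 2)⁻¹ * (-(4 / 3 * (1 / 2 * (P t) ^ 3)) * (P t) ^ 3
        + (x - 4 / 3 * P t) * (3 * (P t) ^ 2 * (1 / 2 * (P t) ^ 3)))) t :=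
    (hasDerivAt_h ((x - 4 / 3 * P t) * (P t) ^ 3)).comp t h4
  have h6 : HasDerivAt (fun s => (P s)⁻¹ * h ((x - 4 / 3 * P s) * (P s) ^ 3))
      (-(1 / 2 * (P t) ^ 3) / (P t) ^ 2 * H
        + (P t)⁻¹ * ((-1 - 3 * H ^ 2)⁻¹ * (-(4 / 3 * (1 / 2 * (P t) ^ 3)) * (P t) ^ 3
          + (x - 4 / 3 * P t) * (3 * (P t) ^ 2 * (1 / 2 * (P t) ^ 3))))) t := h1.mul h5
  have h7 : HasDerivAt
      (fun s => (P s)⁻¹ * h ((x - 4 / 3 * P s) * (P s) ^ 3) + 2 / 3 * (P s) ^ 3)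
      (-(1 / 2 * (P t) ^ 3) / (P t) ^ 2 * H
        + (P t)⁻¹ * ((-1 - 3 * H ^ 2)⁻¹ * (-(4 / 3 * (1 / 2 * (P t) ^ 3)) * (P t) ^ 3
          + (x - 4 / 3 * P t) * (3 * (P t) ^ 2 * (1 / 2 * (P t) ^ 3))))
        + 2 / 3 * (3 * (P t) ^ 2 * (1 / 2 * (P t) ^ 3))) t :=
    h6.add (h2.const_mul (2 / 3))
  have hev : (fun s => W s x) =ᶠ[nhds t]
      (fun s => (P s)⁻¹ * h ((x - 4 / 3 * P s) * (P s) ^ 3) + 2 / 3 * (P s) ^ 3) := by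
    filter_upwards [Iio_mem_nhds ht] with s hs
    exact hWE s hs x
  have hd1 : deriv (fun s => W s x) t =
      -(1 / 2 * (P t) ^ 3) / (P t) ^ 2 * H
        + (P t)⁻¹ * ((-1 - 3 * H ^ 2)⁻¹ * (-(4 / 3 * (1 / 2 * (P t) ^ 3)) * (P t) ^ 3
          + (x - 4 / 3 * P t) * (3 * (P t) ^ 2 * (1 / 2 * (P t) ^ 3))))
        + 2 / 3 * (3 * (P t) ^ 2 * (1 / 2 * (P t) ^ 3)) := by
    rw [hev.deriv_eq]
    exact h7.deriv
  -- z t 0 = 0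
  have hz0 : z t 0 = 0 := by
    have h0 := hz t ht 0
    have key : z t 0 * (t - (z t 0) ^ 2) = 0 := by linear_combination -h0
    rcases mul_eq_zero.mp key with hk | hk
    · exact hk
    · exfalso; nlinarith [sq_nonneg (z t 0)]
  refine ⟨?_, ?_, hz0⟩
  · -- the supersolution inequality
    rw [hd1, hd2, hd3, hWE t ht x, ← hHdef, hxx]
    have hnum : 0 ≤ (1 + 3 * H ^ 2) ^ 3 + 6 * H := by
      nlinarith [sq_nonneg (3 * H + 1), sq_nonneg (H ^ 2), sq_nonneg (H ^ 3)]
    have h9 : (0:ℝ) ≤ (P t) ^ 5 * (((1 + 3 * H ^ 2) ^ 3 + 6 * H) / (1 + 3 * H ^ 2) ^ 3) :=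
      mul_nonneg (by positivity) (div_nonneg hnum (by positivity))
    have hB : (1 : ℝ) + 3 * H ^ 2 ≠ 0 := by positivity
    convert h9 using 1
    rw [show (-1 - 3 * H ^ 2) = -(1 + 3 * H ^ 2) by ring]
    field_simp
    ring
  · rw [hz0, hW]
    have habs : (0:ℝ) < |t| := abs_pos.mpr (ne_of_lt ht)
    have hσ : 0 < sigmaShift t := by rw [sigmaShift]; positivity
    have hzp : 0 ≤ z t (0 - sigmaShift t) := by
      by_contra hneg
      push_neg at hneg
      have h0 := hz t ht (0 - sigmaShift t)
      nlinarith [mul_pos (neg_pos.mpr ht) (neg_pos.mpr hneg),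
        pow_pos (neg_pos.mpr hneg) 3]
    have hpow : 0 ≤ (2:ℝ) / 3 * |t| ^ (-(3:ℝ)/2) := by positivity
    linarith
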